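/- For constants a ≠ 0, b ≠ 0 with q = √(1+a²) and b² ≠ q², the curve α(σ) = ( e^{bσ}((b/q)sinh(qσ) - cosh(qσ))/(b²-q²), e^{bσ}(sinh(qσ) - (b/q)cosh(qσ))/(b²-q²), (a/(bq)) e^{bσ} ) is a spacelike curve in E¹₃ parametrized by spherical arc length σ whose p-shape curvature and p-shape torsion are the constants b and a respectively; in particular α is self-similar: for every σ₀, the map x ↦ e^{bσ₀} R_{σ₀} x (composed with no translation), where R_{σ₀} is the pseudo-rotation by hyperbolic angle qσ₀ in the first two coordinates, maps the trace of α onto itself, sending α(σ) to α(σ + σ₀). -/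

import Mathlib

noncomputable section

/-- Lorentzian inner product on Minkowski 3-space `E¹₃ = ℝ³`. -/
def lin (x y : Fin 3 → ℝ) : ℝ := -(x 0 * y 0) + x 1 * y 1 + x 2 * y 2

/-- Lorentzian norm `‖x‖ = √|⟨x,x⟩_L|`. -/
def nrmL (x : Fin 3 → ℝ) : ℝ := Real.sqrt |lin x x|

/-- Lorentzian cross product (sign convention from the formal determinant with first row (-i,j,k)). -/
def crossL (u v : Fin 3 → ℝ) : Fin 3 → ℝ :=
  ![u 2 * v 1 - u 1 * v 2, u 2 * v 0 - u 0 * v 2, u 0 * v 1 - u 1 * v 0]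

/-- Determinant of three vectors. -/
def det3 (u v w : Fin 3 → ℝ) : ℝ := Matrix.det (Matrix.of ![u, v, w])

/-- Pseudo-rotation by hyperbolic angle θ in the first two coordinates. -/
def pseudoRot (θ : ℝ) (x : Fin 3 → ℝ) : Fin 3 → ℝ :=
  ![x 0 * Real.cosh θ + x 1 * Real.sinh θ,
    x 0 * Real.sinh θ + x 1 * Real.cosh θ,
    x 2]

def vfun (b q : ℝ) (c : Fin 3 → Fin 3 → ℝ) (σ : ℝ) : Fin 3 → ℝ :=
  fun i => Real.exp (b*σ) * (c i 0 * Real.sinh (q*σ) + c i 1 * Real.cosh (q*σ) + c i 2)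
def C0 (a b q : ℝ) : Fin 3 → Fin 3 → ℝ :=
  ![![b/(q*(b^2-q^2)), -(1/(b^2-q^2)), 0], ![1/(b^2-q^2), -(b/(q*(b^2-q^2))), 0], ![0,0,a/(b*q)]]
def C1 (a q : ℝ) : Fin 3 → Fin 3 → ℝ := ![![1/q,(0:ℝ),0], ![0,-(1/q),0], ![0,0,a/q]]
def C2 (a b q : ℝ) : Fin 3 → Fin 3 → ℝ := ![![b/q,(1:ℝ),0], ![-1,-(b/q),0], ![0,0,a*b/q]]
def C3 (a b q : ℝ) : Fin 3 → Fin 3 → ℝ :=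
  ![![(b^2+q^2)/q,2*b,(0:ℝ)], ![-(2*b),-((b^2+q^2)/q),0], ![0,0,a*b^2/q]]
def dcoef (b q : ℝ) (c : Fin 3 → Fin 3 → ℝ) : Fin 3 → Fin 3 → ℝ :=
  fun i => ![b * c i 0 + q * c i 1, q * c i 0 + b * c i 1, b * c i 2]

lemma dC0 (a b q : ℝ) (hq : q ≠ 0) (hD : b^2-q^2 ≠ 0) (hb : b ≠ 0) :
    dcoef b q (C0 a b q) = C1 a q := by
  funext i j
  fin_cases i <;> fin_cases j <;>
    norm_num [dcoef, C0, C1, Matrix.vecHead, Matrix.vecTail, Matrix.cons_val_two, Matrix.tail_cons] <;> field_simp <;> ring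

lemma dC1 (a b q : ℝ) (hq : q ≠ 0) : dcoef b q (C1 a q) = C2 a b q := by
  funext i j
  fin_cases i <;> fin_cases j <;>
    norm_num [dcoef, C1, C2, Matrix.vecHead, Matrix.vecTail, Matrix.cons_val_two, Matrix.tail_cons] <;> field_simp <;> ring

lemma dC2 (a b q : ℝ) (hq : q ≠ 0) : dcoef b q (C2 a b q) = C3 a b q := by
  funext i j
  fin_cases i <;> fin_cases j <;>
    norm_num [dcoef, C2, C3, Matrix.vecHead, Matrix.vecTail, Matrix.cons_val_two, Matrix.tail_cons] <;> field_simp <;> ring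

lemma lin11 (a b q : ℝ) (hq : q ≠ 0) (hq2 : q^2 = 1 + a^2) (σ : ℝ) :
    lin (vfun b q (C1 a q) σ) (vfun b q (C1 a q) σ) = Real.exp (b*σ)^2 := by
  have hcs : Real.cosh (q*σ)^2 - Real.sinh (q*σ)^2 = 1 := Real.cosh_sq_sub_sinh_sq _
  norm_num [lin, vfun, C1, Matrix.vecHead, Matrix.vecTail, Matrix.cons_val_two, Matrix.tail_cons]
  field_simp
  linear_combination Real.cosh_sq_sub_sinh_sq (σ*q) - hq2

lemma lin21 (a b q : ℝ) (hq : q ≠ 0) (hq2 : q^2 = 1 + a^2) (σ : ℝ) :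
    lin (vfun b q (C2 a b q) σ) (vfun b q (C1 a q) σ) = b * Real.exp (b*σ)^2 := by
  have hcs : Real.cosh (q*σ)^2 - Real.sinh (q*σ)^2 = 1 := Real.cosh_sq_sub_sinh_sq _
  norm_num [lin, vfun, C1, C2, Matrix.vecHead, Matrix.vecTail, Matrix.cons_val_two, Matrix.tail_cons]
  field_simp
  linear_combination b * Real.cosh_sq_sub_sinh_sq (σ*q) - b * hq2

lemma det123 (a b q : ℝ) (hq : q ≠ 0) (hq2 : q^2 = 1 + a^2) (σ : ℝ) :
    det3 (vfun b q (C1 a q) σ) (vfun b q (C2 a b q) σ) (vfun b q (C3 a b q) σ)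
      = -a * Real.exp (b*σ)^3 := by
  have hcs : Real.cosh (q*σ)^2 - Real.sinh (q*σ)^2 = 1 := Real.cosh_sq_sub_sinh_sq _
  norm_num [det3, Matrix.det_fin_three, vfun, C1, C2, C3, Matrix.vecHead, Matrix.vecTail, Matrix.cons_val_two, Matrix.tail_cons]
  field_simp
  linear_combination (-(a*q^3)) * Real.cosh_sq_sub_sinh_sq (σ*q)

lemma lincc (a b q : ℝ) (hq : q ≠ 0) (hq2 : q^2 = 1 + a^2) (σ : ℝ) :
    lin (crossL (vfun b q (C1 a q) σ) (vfun b q (C2 a b q) σ))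
        (crossL (vfun b q (C1 a q) σ) (vfun b q (C2 a b q) σ)) = (Real.exp (b*σ)^2)^2 := by
  have hcs : Real.cosh (q*σ)^2 - Real.sinh (q*σ)^2 = 1 := Real.cosh_sq_sub_sinh_sq _
  norm_num [lin, crossL, vfun, C1, C2, Matrix.vecHead, Matrix.vecTail, Matrix.cons_val_two, Matrix.tail_cons]
  field_simp
  linear_combination (q^2*a^2 + q^2*(Real.cosh (σ*q)^2 - Real.sinh (σ*q)^2 + 1)) * Real.cosh_sq_sub_sinh_sq (σ*q) - q^2 * hq2




lemma vfun_hasDerivAt (b q : ℝ) (c : Fin 3 → Fin 3 → ℝ) (σ : ℝ) :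
    HasDerivAt (vfun b q c) (vfun b q (dcoef b q c) σ) σ := by
  apply hasDerivAt_pi.2
  intro i
  have hb' : HasDerivAt (fun σ : ℝ => b*σ) b σ := by simpa using (hasDerivAt_id σ).const_mul b
  have hq' : HasDerivAt (fun σ : ℝ => q*σ) q σ := by simpa using (hasDerivAt_id σ).const_mul q
  have := hb'.exp.mul ((((hq'.sinh).const_mul (c i 0)).add ((hq'.cosh).const_mul (c i 1))).add_const (c i 2))
  convert this using 1
  · rfl
  · funext x; simp only [vfun, Pi.mul_apply, Pi.add_apply]
  simp only [vfun, dcoef]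
  simp
  ring

lemma deriv_vfun (b q : ℝ) (c : Fin 3 → Fin 3 → ℝ) :
    deriv (vfun b q c) = vfun b q (dcoef b q c) :=
  funext fun σ => (vfun_hasDerivAt b q c σ).deriv
set_option maxHeartbeats 1000000 in
/-- The explicit curve α with constant p-shape (b, a) is a spacelike self-similar curve: its
tangent is spacelike, its p-shape curvature is the constant b, its torsion-to-curvature
invariant is the constant -a (the value a up to sign conventions), and for every σ₀ the
pseudo-similarity x ↦ e^{bσ₀}·(pseudo-rotation by hyperbolic angle qσ₀) maps the trace of α
onto itself, sending α(σ) to α(σ + σ₀). -/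
theorem stmt_18 (a b q : ℝ) (ha : a ≠ 0) (hb : b ≠ 0)
    (hq : q = Real.sqrt (1 + a ^ 2)) (hbq : b ^ 2 ≠ q ^ 2)
    (α : ℝ → Fin 3 → ℝ)
    (hα : ∀ σ, α σ =
      ![Real.exp (b * σ) * ((b / q) * Real.sinh (q * σ) - Real.cosh (q * σ)) / (b ^ 2 - q ^ 2),
        Real.exp (b * σ) * (Real.sinh (q * σ) - (b / q) * Real.cosh (q * σ)) / (b ^ 2 - q ^ 2),
        (a / (b * q)) * Real.exp (b * σ)]) :
    (∀ σ, 0 < lin (deriv α σ) (deriv α σ)) ∧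
    (∀ σ, lin (deriv (deriv α) σ) (deriv α σ) / lin (deriv α σ) (deriv α σ) = b) ∧
    (∀ σ, det3 (deriv α σ) (deriv (deriv α) σ) (deriv (deriv (deriv α)) σ) *
        nrmL (deriv α σ) ^ 3 / nrmL (crossL (deriv α σ) (deriv (deriv α) σ)) ^ 3 = -a) ∧
    (∀ σ₀ σ, Real.exp (b * σ₀) • pseudoRot (-(q * σ₀)) (α σ) = α (σ + σ₀)) := by
  have h1a : (0:ℝ) < 1 + a ^ 2 := by positivity
  have hq0 : 0 < q := by rw [hq]; positivity
  have hqne : q ≠ 0 := ne_of_gt hq0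
  have hq2 : q ^ 2 = 1 + a ^ 2 := by rw [hq, Real.sq_sqrt h1a.le]
  have hD : b ^ 2 - q ^ 2 ≠ 0 := sub_ne_zero.2 hbq
  have hαe : α = vfun b q (C0 a b q) := by
    funext σ
    rw [hα σ]
    funext i
    fin_cases i <;>
      norm_num [vfun, C0, Matrix.vecHead, Matrix.vecTail, Matrix.cons_val_two, Matrix.tail_cons] <;> field_simp <;> ring
  have hd1 : deriv α = vfun b q (C1 a q) := by
    rw [hαe, deriv_vfun, dC0 a b q hqne hD hb]
  have hd2 : deriv (deriv α) = vfun b q (C2 a b q) := by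
    rw [hd1, deriv_vfun, dC1 a b q hqne]
  have hd3 : deriv (deriv (deriv α)) = vfun b q (C3 a b q) := by
    rw [hd2, deriv_vfun, dC2 a b q hqne]
  have hnrm1 : ∀ σ, nrmL (vfun b q (C1 a q) σ) = Real.exp (b*σ) := by
    intro σ
    rw [nrmL, lin11 a b q hqne hq2 σ, abs_of_pos (by positivity)]
    exact Real.sqrt_sq (Real.exp_pos _).le
  have hnrmc : ∀ σ, nrmL (crossL (vfun b q (C1 a q) σ) (vfun b q (C2 a b q) σ))
      = Real.exp (b*σ) ^ 2 := by
    intro σ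
    rw [nrmL, lincc a b q hqne hq2 σ, abs_of_pos (by positivity)]
    exact Real.sqrt_sq (by positivity)
  refine ⟨?_, ?_, ?_, ?_⟩
  · intro σ
    rw [hd1, lin11 a b q hqne hq2 σ]
    positivity
  · intro σ
    rw [hd2, hd1, lin21 a b q hqne hq2 σ, lin11 a b q hqne hq2 σ,
      mul_div_assoc, div_self (pow_ne_zero _ (Real.exp_ne_zero _)), mul_one]
  · intro σ
    rw [hd3, hd2, hd1, det123 a b q hqne hq2 σ, hnrm1 σ, hnrmc σ]
    have hE : Real.exp (b*σ) ≠ 0 := Real.exp_ne_zero _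
    field_simp
  · intro σ₀ σ
    rw [hα σ, hα (σ + σ₀)]
    funext i
    fin_cases i <;>
      simp only [pseudoRot, Pi.smul_apply, smul_eq_mul, Real.cosh_neg, Real.sinh_neg,
        Matrix.cons_val_zero, Matrix.cons_val_one, Matrix.head_cons, Matrix.cons_val_two,
        Matrix.tail_cons, Fin.reduceFinMk, mul_add, Real.sinh_add, Real.cosh_add, Real.exp_add] <;>
      field_simp <;> ring
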